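/- For all objects X, X' of 𝒜, the structure isomorphism μ_{X,X'} : ω(X)⊗ω(X') ≅ ω(X⊠X') intertwines the coactions up to the bialgebra multiplication: ρ_{X⊠X'}∘μ_{X,X'} = (μ_{X,X'} ⊗ m_C)∘(id_{ω(X)} ⊗ τ ⊗ id_C)∘(ρ_X ⊗ ρ_{X'}), where m_C : C⊗C → C is the multiplication of C and τ : C ⊗ ω(X') → ω(X') ⊗ C is the flip. Moreover ρ_𝟙(u(1)) = u(1) ⊗ 1_C. -/

import Mathlib

/-!
STATEMENT 10: For all objects `X, X'` of `𝒜`, the structure isomorphism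
`μ_{X,X'} : ω(X)⊗ω(X') ≅ ω(X⊠X')` intertwines the coactions up to the bialgebra
multiplication: `ρ_{X⊠X'}∘μ_{X,X'} = (μ_{X,X'} ⊗ m_C)∘(id ⊗ τ ⊗ id)∘(ρ_X ⊗ ρ_{X'})`,
and `ρ_𝟙(u(1)) = u(1) ⊗ 1_C`.
-/

open CategoryTheory TensorProduct MonoidalCategory

noncomputable section

namespace Tannaka

variable (k : Type) [Field k] (A : Type) [SmallCategory A] [DecidableEq A]
  [Preadditive A] [CategoryTheory.Linear k A]
  [MonoidalCategory A] [MonoidalPreadditive A] [MonoidalLinear k A]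
variable (ω : A ⥤ ModuleCat k) [ω.Additive] [Functor.Linear k ω] [ω.Monoidal]

/-- The direct sum `⨁_{X ∈ Ob 𝒜} ω(X)^∨ ⊗ ω(X)`. -/
abbrev HH0pre : Type := DirectSum A (fun X => Module.Dual k (ω.obj X) ⊗[k] ω.obj X)

instance : AddCommGroup (HH0pre k A ω) :=
  @DFinsupp.addCommGroup A (fun X => Module.Dual k (ω.obj X) ⊗[k] ω.obj X) (fun _ => inferInstance)

/-- The subspace spanned by the elements `(φ∘ω(f))⊗v − φ⊗ω(f)(v)`. -/
def HH0rel : Submodule k (HH0pre k A ω) :=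
  Submodule.span k
    { z | ∃ (X Y : A) (f : X ⟶ Y) (φ : Module.Dual k (ω.obj Y)) (v : ω.obj X),
        z = DirectSum.lof k A (fun X => Module.Dual k (ω.obj X) ⊗[k] ω.obj X) X
              ((φ ∘ₗ (ω.map f).hom) ⊗ₜ[k] v)
          - DirectSum.lof k A (fun X => Module.Dual k (ω.obj X) ⊗[k] ω.obj X) Y
              (φ ⊗ₜ[k] (ω.map f v)) }

/-- `C = HH₀(𝒜, ω^∨ ⊗ ω)`. -/
abbrev HH0 : Type := HH0pre k A ω ⧸ HH0rel k A ω

/-- The class `[φ ⊗ v]` in `HH₀`. -/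
def cls (X : A) (φ : Module.Dual k (ω.obj X)) (v : ω.obj X) : HH0 k A ω :=
  Submodule.Quotient.mk
    (DirectSum.lof k A (fun X => Module.Dual k (ω.obj X) ⊗[k] ω.obj X) X (φ ⊗ₜ[k] v))

/-- The functional `(φ⊗φ')∘μ⁻¹ ∈ ω(X⊠X')^∨`. -/
def dPair (X X' : A) (φ : Module.Dual k (ω.obj X)) (φ' : Module.Dual k (ω.obj X')) :
    Module.Dual k (ω.obj (X ⊗ X')) :=
  (TensorProduct.lid k k).toLinearMap ∘ₗ TensorProduct.map φ φ' ∘ₗ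
    ((Functor.OplaxMonoidal.δ ω X X').hom : _ →ₗ[k] _)

/-- The functional `ū = u⁻¹ ∈ ω(𝟙)^∨`. -/
def uBar : Module.Dual k (ω.obj (𝟙_ A)) := ((Functor.OplaxMonoidal.η ω).hom : _ →ₗ[k] _)


/-- `μ_{X,X'}` as a linear equivalence. -/
def muEquiv (X X' : A) : (ω.obj X ⊗[k] ω.obj X') ≃ₗ[k] ω.obj (X ⊗ X') :=
  LinearEquiv.ofLinear (Functor.LaxMonoidal.μ ω X X').hom (Functor.OplaxMonoidal.δ ω X X').hom
    (congrArg ModuleCat.Hom.hom (Functor.Monoidal.δ_μ (F := ω) X X'))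
    (congrArg ModuleCat.Hom.hom (Functor.Monoidal.μ_δ (F := ω) X X'))

/-- `u` as a linear equivalence. -/
def epsEquiv : k ≃ₗ[k] ω.obj (𝟙_ A) :=
  LinearEquiv.ofLinear (Functor.LaxMonoidal.ε ω).hom (Functor.OplaxMonoidal.η ω).hom
    (congrArg ModuleCat.Hom.hom (Functor.Monoidal.η_ε (F := ω)))
    (congrArg ModuleCat.Hom.hom (Functor.Monoidal.ε_η (F := ω)))

theorem coord_eq [∀ X : A, FiniteDimensional k (ω.obj X)] (X X' : A)
    {ι ι' : Type} (b : Module.Basis ι k (ω.obj X)) (b' : Module.Basis ι' k (ω.obj X')) (i : ι) (j : ι') :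
    ((b.tensorProduct b').map (muEquiv k A ω X X')).coord (i, j) =
      dPair k A ω X X' (b.coord i) (b'.coord j) := by
  apply LinearMap.ext
  intro w
  rw [← (muEquiv k A ω X X').apply_symm_apply w]
  set t := (muEquiv k A ω X X').symm w with ht
  clear_value t; clear ht w
  have hL : ∀ t, (((b.tensorProduct b').map (muEquiv k A ω X X')).coord (i, j))
      ((muEquiv k A ω X X') t) = (b.tensorProduct b').repr t (i, j) := by
    intro t
    simp [Module.Basis.coord, Module.Basis.map_repr]
  rw [hL]
  have hδ : (Functor.OplaxMonoidal.δ ω X X').hom ((muEquiv k A ω X X') t) = t :=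
    LinearMap.congr_fun (congrArg ModuleCat.Hom.hom (Functor.Monoidal.μ_δ (F := ω) X X')) t
  rw [dPair]
  simp only [LinearMap.comp_apply, LinearEquiv.coe_coe]
  erw [hδ]
  clear hδ
  induction t with
  | zero => simp
  | add x y hx hy => simp [map_add, hx, hy]
  | tmul m n =>
      rw [Module.Basis.tensorProduct_repr_tmul_apply]
      simp [Module.Basis.coord, smul_eq_mul, mul_comm]

set_option maxHeartbeats 1000000 in
set_option synthInstance.maxHeartbeats 400000 in
theorem coaction_monoidal_compatibility
    [∀ X : A, FiniteDimensional k (ω.obj X)]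
    -- the coaction maps, characterised on elements via any basis:
    (ρ : ∀ X : A, (ω.obj X →ₗ[k] (ω.obj X ⊗[k] HH0 k A ω)))
    (hρ : ∀ (X : A) (ι : Type) [Fintype ι] (b : Module.Basis ι k (ω.obj X)) (v : ω.obj X),
      ρ X v = ∑ i : ι, (b i) ⊗ₜ[k] (cls k A ω X (b.coord i) v))
    -- the bialgebra multiplication and unit of `C`, characterised on classes:
    (mul : HH0 k A ω →ₗ[k] HH0 k A ω →ₗ[k] HH0 k A ω)
    (hmul : ∀ (X X' : A) (φ : Module.Dual k (ω.obj X)) (φ' : Module.Dual k (ω.obj X'))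
        (v : ω.obj X) (v' : ω.obj X'),
      mul (cls k A ω X φ v) (cls k A ω X' φ' v') =
        cls k A ω (X ⊗ X') (dPair k A ω X X' φ φ')
          (Functor.LaxMonoidal.μ ω X X' (v ⊗ₜ[k] v')))
    (one : HH0 k A ω)
    (hone : one = cls k A ω (𝟙_ A) (uBar k A ω) (Functor.LaxMonoidal.ε ω (1 : k))) :
    -- `μ_{X,X'}` intertwines the coactions up to the multiplication `m_C`:
    (∀ (X X' : A) (v : ω.obj X) (v' : ω.obj X'),
      ρ (X ⊗ X') (Functor.LaxMonoidal.μ ω X X' (v ⊗ₜ[k] v')) =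
        (TensorProduct.map ((Functor.LaxMonoidal.μ ω X X').hom : _ →ₗ[k] _)
            (TensorProduct.lift mul))
          ((TensorProduct.tensorTensorTensorComm k (ω.obj X) (HH0 k A ω)
              (ω.obj X') (HH0 k A ω)) ((ρ X v) ⊗ₜ[k] (ρ X' v')))) ∧
    -- and `ρ_𝟙(u(1)) = u(1) ⊗ 1_C`:
    ρ (𝟙_ A) (Functor.LaxMonoidal.ε ω (1 : k)) =
      (Functor.LaxMonoidal.ε ω (1 : k)) ⊗ₜ[k] one := by
  constructor
  · intro X X' v v'
    classical
    let b := Module.finBasis k (ω.obj X)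
    let b' := Module.finBasis k (ω.obj X')
    let B := (b.tensorProduct b').map (muEquiv k A ω X X')
    rw [hρ X _ b v, hρ X' _ b' v', hρ (X ⊗ X') _ B]
    rw [sum_tmul]
    rw [map_sum, map_sum]
    simp only [tmul_sum, map_sum, tensorTensorTensorComm_tmul, map_tmul, lift.tmul, hmul]
    rw [← Finset.sum_product']
    rw [show (Finset.univ : Finset (Fin (Module.finrank k (ω.obj X)) ×
      Fin (Module.finrank k (ω.obj X')))) = Finset.univ ×ˢ Finset.univ from rfl]
    apply Finset.sum_congr rfl
    rintro ⟨i, j⟩ -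
    congr 1
    · simp only [B, Module.Basis.map_apply, Module.Basis.tensorProduct_apply, muEquiv, LinearEquiv.ofLinear_apply]
    · rw [show B.coord (i, j) = dPair k A ω X X' (b.coord i) (b'.coord j) from
        coord_eq k A ω X X' b b' i j]
  · let B := (Module.Basis.singleton PUnit k).map (epsEquiv k A ω)
    rw [hρ (𝟙_ A) PUnit B]
    rw [show (Finset.univ : Finset PUnit) = {PUnit.unit} from rfl, Finset.sum_singleton]
    rw [hone]
    congr 1
    · show (epsEquiv k A ω) (Module.Basis.singleton PUnit k PUnit.unit) = _
      simp [Module.Basis.singleton_apply]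
      rfl
    · congr 1
      apply LinearMap.ext
      intro w
      show (Module.Basis.singleton PUnit k).repr ((epsEquiv k A ω).symm w) PUnit.unit = _
      rw [Module.Basis.singleton_repr]
      rfl


end Tannaka
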